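/- Let L ≥ 2 be a natural number, and let N be a positive integer with the property that every multiset of N elements of (ℤ/Lℤ)ˣ contains a nonempty sub-multiset whose product is 1. Let r and t be integers with r > t > N, and let S be a finite set of r distinct elements of (ℤ/Lℤ)ˣ. Then the number of distinct subsets of S of cardinality at most t and at least t − N whose product of elements equals 1 is at least (r choose t)/(r choose N). -/

import Mathlib

open scoped Classical

private lemma extract_subset (L N : ℕ)
    (hprop : ∀ M : Multiset (ZMod L)ˣ, Multiset.card M = N →
      ∃ M' ≤ M, M' ≠ 0 ∧ M'.prod = 1) :
    ∀ T : Finset (ZMod L)ˣ,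
      ∃ U, U ⊆ T ∧ (∏ x ∈ U, x) = 1 ∧ T.card ≤ U.card + N := by
  intro T
  induction T using Finset.strongInduction with
  | _ T ih =>
    by_cases h : T.card < N
    · exact ⟨∅, Finset.empty_subset _, by simp, by omega⟩
    · obtain ⟨W, hWT, hWcard⟩ := Finset.exists_subset_card_eq (s := T) (n := N) (by omega)
      obtain ⟨M', hM'le, hM'ne, hM'prod⟩ := hprop W.val (by simpa using hWcard)
      set V : Finset (ZMod L)ˣ := ⟨M', Multiset.nodup_of_le hM'le W.nodup⟩ with hV
      have hVW : V ⊆ W := fun x hx => Multiset.mem_of_le hM'le hx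
      have hVT : V ⊆ T := hVW.trans hWT
      have hVne : V.Nonempty := by
        rw [Finset.nonempty_iff_ne_empty]
        intro hc
        exact hM'ne (by simpa [hV, Finset.ext_iff] using congrArg Finset.val hc)
      obtain ⟨U', hU'sub, hU'prod, hU'card⟩ := ih (T \ V) (Finset.sdiff_ssubset hVT hVne)
      have hdisj : Disjoint U' V := by
        refine Finset.disjoint_left.mpr fun x hx hxV => ?_
        exact (Finset.mem_sdiff.mp (hU'sub hx)).2 hxV
      refine ⟨U' ∪ V, ?_, ?_, ?_⟩
      · exact Finset.union_subset (hU'sub.trans (Finset.sdiff_subset)) hVT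
      · rw [Finset.prod_union hdisj, hU'prod]
        have : (∏ x ∈ V, x) = M'.prod := by
          show (Multiset.map (fun x => x) M').prod = M'.prod
          rw [Multiset.map_id']
        rw [this, hM'prod, one_mul]
      · have h1 : (T \ V).card + V.card = T.card := Finset.card_sdiff_add_card_eq_card hVT
        have h2 : (U' ∪ V).card = U'.card + V.card := Finset.card_union_of_disjoint hdisj
        omega

/-- If every multiset of `N` elements of `(ℤ/Lℤ)ˣ` has a nonempty sub-multiset with
product `1`, and `r > t > N`, then any set `S` of `r` distinct elements of `(ℤ/Lℤ)ˣ`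
has at least `(r choose t) / (r choose N)` subsets of cardinality at most `t` and at
least `t - N` whose product is `1`. -/
theorem many_subsets_with_product_one (L : ℕ) (hL : 2 ≤ L) (N : ℕ) (hN : 0 < N)
    (hprop : ∀ M : Multiset (ZMod L)ˣ, Multiset.card M = N →
      ∃ M' ≤ M, M' ≠ 0 ∧ M'.prod = 1)
    (r t : ℕ) (htr : t < r) (hNt : N < t)
    (S : Finset (ZMod L)ˣ) (hS : S.card = r) :
    ((r.choose t : ℝ) / (r.choose N : ℝ)) ≤
      ((S.powerset.filter
          (fun T => T.card ≤ t ∧ t - N ≤ T.card ∧ (∏ x ∈ T, x) = 1)).card : ℝ) := by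
  classical
  set Q := S.powerset.filter
      (fun T => T.card ≤ t ∧ t - N ≤ T.card ∧ (∏ x ∈ T, x) = 1) with hQ
  -- the extraction function
  set f : Finset (ZMod L)ˣ → Finset (ZMod L)ˣ := fun T =>
    (extract_subset L N hprop T).choose with hf
  have hfspec : ∀ T : Finset (ZMod L)ˣ,
      f T ⊆ T ∧ (∏ x ∈ f T, x) = 1 ∧ T.card ≤ (f T).card + N := fun T =>
    (extract_subset L N hprop T).choose_spec
  set s := S.powersetCard t with hs
  have hmem : ∀ T ∈ s, T ⊆ S ∧ T.card = t := by
    intro T hT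
    exact Finset.mem_powersetCard.mp hT
  -- image of f lands in Q
  have himage : s.image f ⊆ Q := by
    intro U hU
    obtain ⟨T, hT, hTU⟩ := Finset.mem_image.mp hU
    obtain ⟨hTS, hTt⟩ := hmem T hT
    obtain ⟨h1, h2, h3⟩ := hfspec T
    rw [← hTU]
    refine Finset.mem_filter.mpr ⟨Finset.mem_powerset.mpr (h1.trans hTS), ?_, ?_, h2⟩
    · exact le_trans (Finset.card_le_card h1) (le_of_eq hTt)
    · omega
  -- fiber bound
  have hfiber : ∀ U ∈ s.image f, (s.filter (fun T => f T = U)).card ≤ r.choose N := by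
    intro U hU
    obtain ⟨T0, hT0, hT0U⟩ := Finset.mem_image.mp hU
    obtain ⟨hT0S, hT0t⟩ := hmem T0 hT0
    obtain ⟨h1, h2, h3⟩ := hfspec T0
    set u := U.card with hu
    have hut : u ≤ t := by
      rw [hu, ← hT0U, ← hT0t]; exact Finset.card_le_card h1
    have htuN : t ≤ u + N := by rw [hu, ← hT0U, ← hT0t]; exact h3
    have hUS : U ⊆ S := hT0U ▸ h1.trans hT0S
    -- injection into (S \ U).powersetCard (t - u)
    have hcard1 : (s.filter (fun T => f T = U)).card ≤
        ((S \ U).powersetCard (t - u)).card := by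
      apply Finset.card_le_card_of_injOn (fun T => T \ U)
      · intro T hT
        obtain ⟨hTs, hfT⟩ := Finset.mem_filter.mp hT
        obtain ⟨hTS, hTt⟩ := hmem T hTs
        have hUT : U ⊆ T := hfT ▸ (hfspec T).1
        refine Finset.mem_powersetCard.mpr ⟨Finset.sdiff_subset_sdiff hTS le_rfl, ?_⟩
        rw [Finset.card_sdiff_of_subset hUT, hTt]
      · intro T1 hT1 T2 hT2 heq
        simp only [Finset.coe_filter, Set.mem_setOf_eq] at hT1 hT2
        have hUT1 : U ⊆ T1 := hT1.2 ▸ (hfspec T1).1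
        have hUT2 : U ⊆ T2 := hT2.2 ▸ (hfspec T2).1
        dsimp only at heq
        have : T1 \ U ∪ U = T2 \ U ∪ U := by rw [heq]
        rwa [Finset.sdiff_union_of_subset hUT1, Finset.sdiff_union_of_subset hUT2] at this
    rw [Finset.card_powersetCard, Finset.card_sdiff_of_subset hUS, hS] at hcard1
    -- arithmetic: C(r-u, t-u) ≤ C(r, N)
    have harith : (r - u).choose (t - u) ≤ r.choose N := by
      have e1 : (r - u).choose (t - u) = (r - u).choose (r - t) := by
        rw [← Nat.choose_symm (by omega : t - u ≤ r - u)]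
        congr 1; omega
      have e2 : (r - u).choose (r - t) ≤ (r - t + N).choose (r - t) :=
        Nat.choose_le_choose _ (by omega)
      have e3 : (r - t + N).choose (r - t) = (r - t + N).choose N := by
        rw [← Nat.choose_symm (by omega : N ≤ r - t + N)]
        congr 1; omega
      have e4 : (r - t + N).choose N ≤ r.choose N :=
        Nat.choose_le_choose _ (by omega)
      omega
    exact le_trans hcard1 harith
  have hmain : r.choose t ≤ r.choose N * Q.card := by
    have h1 : s.card ≤ r.choose N * (s.image f).card :=
      Finset.card_le_mul_card_image s (r.choose N) hfiber
    have h2 : (s.image f).card ≤ Q.card := Finset.card_le_card himage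
    have h3 : s.card = r.choose t := by rw [hs, Finset.card_powersetCard, hS]
    calc r.choose t = s.card := h3.symm
      _ ≤ r.choose N * (s.image f).card := h1
      _ ≤ r.choose N * Q.card := Nat.mul_le_mul_left _ h2
  have hpos : (0 : ℝ) < (r.choose N : ℝ) := by
    have : 0 < r.choose N := Nat.choose_pos (by omega)
    exact_mod_cast this
  rw [div_le_iff₀ hpos]
  calc ((r.choose t : ℝ)) ≤ ((r.choose N * Q.card : ℕ) : ℝ) := by exact_mod_cast hmain
    _ = (Q.card : ℝ) * (r.choose N : ℝ) := by push_cast; ring
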